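/- Let V, W be self-adjoint unitaries such that V + W and V − W are invertible, and define X = (V+W)|V+W|^{-1}, Z = (V−W)|V−W|^{-1}. Then X and Z are self-adjoint unitaries and XZ = −ZX. -/

import Mathlib

section Aux

variable {A : Type*} [CStarAlgebra A]

lemma my_isClosed_centralizer (b : A) :
    IsClosed (StarSubalgebra.centralizer ℂ ({b} : Set A) : Set A) := by
  rw [StarSubalgebra.coe_centralizer]
  have : (({b} ∪ star {b}) : Set A).centralizer =
      ⋂ m ∈ (({b} ∪ star {b}) : Set A), {x : A | m * x = x * m} := by
    ext x; simp [Set.mem_centralizer_iff]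
  rw [this]
  exact isClosed_biInter fun m _ =>
    isClosed_eq (continuous_const.mul continuous_id) (continuous_id.mul continuous_const)

lemma my_commute_cfc {a b : A} (_ha : IsStarNormal a) (h1 : Commute b a)
    (h2 : Commute b (star a)) (f : ℂ → ℂ) : Commute b (cfc f a) := by
  refine cfc_cases (fun x => Commute b x) a f (Commute.zero_right b) fun hf ha' => ?_
  have hmem : cfcHom ha' (⟨_, hf.restrict⟩ : C(spectrum ℂ a, ℂ)) ∈
      StarAlgebra.elemental ℂ a := by
    rw [cfcHom_eq_of_isStarNormal]
    exact Subtype.coe_prop _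
  have hle : StarAlgebra.elemental ℂ a ≤ StarSubalgebra.centralizer ℂ ({b} : Set A) := by
    refine StarAlgebra.elemental.le_of_mem (my_isClosed_centralizer b) ?_
    rw [StarSubalgebra.mem_centralizer_iff]
    rintro g rfl
    refine ⟨h1.eq, ?_⟩
    have := congrArg star h2.eq
    simpa [mul_comm] using this.symm
  have := hle hmem
  rw [StarSubalgebra.mem_centralizer_iff] at this
  exact (this b rfl).1

lemma my_commute_sqrt [PartialOrder A] [StarOrderedRing A] {a b : A} (hnn : 0 ≤ a)
    (h : Commute b a) : Commute b (CFC.sqrt a) := by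
  have hsa : IsSelfAdjoint a := .of_nonneg hnn
  rw [CFC.sqrt_eq_cfc, cfc_nnreal_eq_real _ _ hnn, cfc_real_eq_complex _ hsa]
  exact my_commute_cfc hsa.isStarNormal h (hsa.star_eq.symm ▸ h) _

lemma my_commute_ringInverse {a b : A} (h : Commute a b) (hb : IsUnit b) :
    Commute a (Ring.inverse b) := by
  have h1 : b * Ring.inverse b = 1 := Ring.mul_inverse_cancel b hb
  have h2 : Ring.inverse b * b = 1 := Ring.inverse_mul_cancel b hb
  show a * Ring.inverse b = Ring.inverse b * a
  calc a * Ring.inverse b = Ring.inverse b * b * a * Ring.inverse b := by rw [h2, one_mul]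
    _ = Ring.inverse b * (a * b) * Ring.inverse b := by rw [h.eq]; noncomm_ring
    _ = Ring.inverse b * a * (b * Ring.inverse b) := by noncomm_ring
    _ = Ring.inverse b * a := by rw [h1, mul_one]

variable [PartialOrder A] [StarOrderedRing A]

/-- Key: for a self-adjoint unit `P`, `X = P |P|⁻¹` is a self-adjoint unitary,
and `|P| = √(P*P)` is a unit. -/
lemma my_key (P : A) (hsa : IsSelfAdjoint P) (hU : IsUnit P) :
    IsUnit (CFC.sqrt (P * P)) ∧
    star (P * Ring.inverse (CFC.sqrt (P * P))) = P * Ring.inverse (CFC.sqrt (P * P)) ∧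
    (P * Ring.inverse (CFC.sqrt (P * P))) * (P * Ring.inverse (CFC.sqrt (P * P))) = 1 := by
  set S := CFC.sqrt (P * P) with hSdef
  have hPP : (0 : A) ≤ P * P := by
    simpa [hsa.star_eq] using star_mul_self_nonneg P
  have hPPu : IsUnit (P * P) := hU.mul hU
  have hSnn : (0 : A) ≤ S := CFC.sqrt_nonneg _
  have hSsa : IsSelfAdjoint S := .of_nonneg hSnn
  have hSS : S * S = P * P := CFC.sqrt_mul_sqrt_self _ hPP
  -- S commutes with P*P, hence with Ring.inverse (P*P)
  have hSPP : Commute S (P * P) := (my_commute_sqrt hPP (Commute.refl _)).symm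
  have hSiPP : Commute S (Ring.inverse (P * P)) := my_commute_ringInverse hSPP hPPu
  -- S is a unit
  have hSu : IsUnit S := by
    refine isUnit_iff_exists.mpr ⟨S * Ring.inverse (P * P), ?_, ?_⟩
    · rw [← mul_assoc, hSS, Ring.mul_inverse_cancel _ hPPu]
    · rw [mul_assoc, ← hSiPP.eq, ← mul_assoc, hSS, Ring.mul_inverse_cancel _ hPPu]
  have hPS : Commute P S :=
    my_commute_sqrt hPP ((Commute.refl P).mul_right (Commute.refl P))
  have hPiS : Commute P (Ring.inverse S) := my_commute_ringInverse hPS hSu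
  refine ⟨hSu, ?_, ?_⟩
  · calc star (P * Ring.inverse S)
        = star (Ring.inverse S) * star P := star_mul _ _
      _ = Ring.inverse (star S) * P := by rw [Ring.inverse_star, hsa.star_eq]
      _ = Ring.inverse S * P := by rw [hSsa.star_eq]
      _ = P * Ring.inverse S := hPiS.eq.symm
  · calc (P * Ring.inverse S) * (P * Ring.inverse S)
        = P * (Ring.inverse S * P) * Ring.inverse S := by noncomm_ring
      _ = P * (P * Ring.inverse S) * Ring.inverse S := by rw [hPiS.eq]
      _ = (P * P) * (Ring.inverse S * Ring.inverse S) := by noncomm_ring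
      _ = (P * P) * Ring.inverse (S * S) := by
          rw [Ring.mul_inverse_rev' (Commute.refl S)]
      _ = (P * P) * Ring.inverse (P * P) := by rw [hSS]
      _ = 1 := Ring.mul_inverse_cancel _ hPPu

end Aux

/-- For self-adjoint unitaries `V, W` with `V + W` and `V − W` invertible, the
operators `X = (V+W)|V+W|⁻¹` and `Z = (V−W)|V−W|⁻¹` (with `|T| = √(T²)`) are
self-adjoint unitaries and anticommute: `XZ = −ZX`. -/
theorem stmt5 {H : Type*} [NormedAddCommGroup H] [InnerProductSpace ℂ H] [CompleteSpace H]
    (V W : H →L[ℂ] H)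
    (hVsa : ContinuousLinearMap.adjoint V = V) (hV2 : V * V = 1)
    (hWsa : ContinuousLinearMap.adjoint W = W) (hW2 : W * W = 1)
    (hinvP : IsUnit (V + W)) (hinvM : IsUnit (V - W))
    (X Z : H →L[ℂ] H)
    (hX : X = (V + W) * Ring.inverse (CFC.sqrt ((V + W) * (V + W))))
    (hZ : Z = (V - W) * Ring.inverse (CFC.sqrt ((V - W) * (V - W)))) :
    ContinuousLinearMap.adjoint X = X ∧ X * X = 1 ∧
    ContinuousLinearMap.adjoint Z = Z ∧ Z * Z = 1 ∧
    X * Z = -(Z * X) := by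
  set P : H →L[ℂ] H := V + W with hPdef
  set M : H →L[ℂ] H := V - W with hMdef
  have hVsa' : star V = V := by rw [ContinuousLinearMap.star_eq_adjoint, hVsa]
  have hWsa' : star W = W := by rw [ContinuousLinearMap.star_eq_adjoint, hWsa]
  have hPsa : IsSelfAdjoint P := by
    simp only [IsSelfAdjoint, hPdef, star_add, hVsa', hWsa']
  have hMsa : IsSelfAdjoint M := by
    simp only [IsSelfAdjoint, hMdef, star_sub, hVsa', hWsa']
  -- anticommutation of P and M
  have e1 : P * M = W * V - V * W := by
    simp only [hPdef, hMdef, add_mul, mul_sub, hV2, hW2]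
    abel
  have e2 : M * P = V * W - W * V := by
    simp only [hPdef, hMdef, sub_mul, mul_add, hV2, hW2]
    abel
  have hPM : P * M = -(M * P) := by rw [e1, e2]; abel
  have hMP : M * P = -(P * M) := by rw [hPM, neg_neg]
  -- commutation with squares
  have hMPP : Commute M (P * P) := by
    show M * (P * P) = (P * P) * M
    calc M * (P * P) = (M * P) * P := by rw [mul_assoc]
      _ = -((P * M) * P) := by rw [hMP, neg_mul]
      _ = -(P * (M * P)) := by rw [mul_assoc]
      _ = P * (P * M) := by rw [hMP, mul_neg, neg_neg]
      _ = (P * P) * M := by rw [mul_assoc]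
  have hPMM : Commute P (M * M) := by
    show P * (M * M) = (M * M) * P
    calc P * (M * M) = (P * M) * M := by rw [mul_assoc]
      _ = -((M * P) * M) := by rw [hPM, neg_mul]
      _ = -(M * (P * M)) := by rw [mul_assoc]
      _ = M * (M * P) := by rw [hPM, mul_neg, neg_neg]
      _ = (M * M) * P := by rw [mul_assoc]
  have hPPnn : (0 : H →L[ℂ] H) ≤ P * P := by
    simpa [hPsa.star_eq] using star_mul_self_nonneg P
  have hMMnn : (0 : H →L[ℂ] H) ≤ M * M := by
    simpa [hMsa.star_eq] using star_mul_self_nonneg M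
  set S : H →L[ℂ] H := CFC.sqrt (P * P) with hSdef
  set T : H →L[ℂ] H := CFC.sqrt (M * M) with hTdef
  obtain ⟨hSu, hXsa, hXX⟩ := my_key P hPsa hinvP
  obtain ⟨hTu, hZsa, hZZ⟩ := my_key M hMsa hinvM
  refine ⟨?_, ?_, ?_, ?_, ?_⟩
  · rw [← ContinuousLinearMap.star_eq_adjoint, hX, hXsa]
  · rw [hX]; exact hXX
  · rw [← ContinuousLinearMap.star_eq_adjoint, hZ, hZsa]
  · rw [hZ]; exact hZZ
  · -- anticommutation
    have hMS : Commute M S := my_commute_sqrt hPPnn hMPP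
    have hPT : Commute P T := my_commute_sqrt hMMnn hPMM
    have hMMPP : Commute (M * M) (P * P) :=
      hPMM.symm.mul_right hPMM.symm
    have hST : Commute S T := by
      have h1 : Commute (M * M) S := my_commute_sqrt hPPnn hMMPP
      exact my_commute_sqrt hMMnn h1.symm
    have hMiS : Commute M (Ring.inverse S) := my_commute_ringInverse hMS hSu
    have hPiT : Commute P (Ring.inverse T) := my_commute_ringInverse hPT hTu
    have hiSiT : Commute (Ring.inverse S) (Ring.inverse T) :=
      (my_commute_ringInverse (my_commute_ringInverse hST.symm hSu).symm hTu)
    rw [hX, hZ]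
    calc (P * Ring.inverse S) * (M * Ring.inverse T)
        = P * (Ring.inverse S * M) * Ring.inverse T := by noncomm_ring
      _ = P * (M * Ring.inverse S) * Ring.inverse T := by rw [← hMiS.eq]
      _ = (P * M) * (Ring.inverse S * Ring.inverse T) := by noncomm_ring
      _ = -((M * P) * (Ring.inverse S * Ring.inverse T)) := by rw [hPM, neg_mul]
      _ = -((M * P) * (Ring.inverse T * Ring.inverse S)) := by rw [hiSiT.eq]
      _ = -(M * (P * Ring.inverse T) * Ring.inverse S) := by noncomm_ring
      _ = -(M * (Ring.inverse T * P) * Ring.inverse S) := by rw [hPiT.eq]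
      _ = -((M * Ring.inverse T) * (P * Ring.inverse S)) := by noncomm_ring
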